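/- The class of Boolean algebras has the superamalgamation property: for all Boolean algebras A, B, C and injective Boolean algebra homomorphisms (bounded lattice homomorphisms) f : C → A, g : C → B, there exist a Boolean algebra D and injective Boolean algebra homomorphisms h : A → D, k : B → D such that h ∘ f = k ∘ g; whenever h(a) = k(b) there is c ∈ C with a = f(c) and b = g(c); whenever h(a) ≤ k(b) there is c ∈ C with a ≤ f(c) and g(c) ≤ b; and whenever k(b) ≤ h(a) there is c ∈ C with b ≤ g(c) and f(c) ≤ a. -/

import Mathlib

universe u

open Order

namespace SuperAmalg

variable {A B C : Type u} [BooleanAlgebra A] [BooleanAlgebra B] [BooleanAlgebra C]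

/-- The preimage of an ideal under a bounded lattice hom, as an ideal. -/
def preimageIdeal (f : BoundedLatticeHom C A) (p : Ideal A) : Ideal C :=
  IsIdeal.toIdeal (I := {c | f c ∈ p})
    { IsLowerSet := fun c c' hle hc => p.lower (OrderHomClass.mono f hle) hc
      Nonempty := ⟨⊥, show f ⊥ ∈ p by rw [map_bot]; exact p.bot_mem⟩
      Directed := fun c hc c' hc' =>
        ⟨c ⊔ c', show f (c ⊔ c') ∈ p by rw [map_sup]; exact Ideal.sup_mem hc hc',
          le_sup_left, le_sup_right⟩ }

@[simp] lemma mem_preimageIdeal {f : BoundedLatticeHom C A} {p : Ideal A} {c : C} :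
    c ∈ preimageIdeal f p ↔ f c ∈ p := Iff.rfl

lemma preimageIdeal_isPrime (f : BoundedLatticeHom C A) {p : Ideal A} (hp : p.IsPrime) :
    (preimageIdeal f p).IsPrime := by
  haveI : (preimageIdeal f p).IsProper :=
    Ideal.isProper_of_notMem (p := ⊤)
      (by simpa [mem_preimageIdeal] using hp.toIsProper.top_notMem)
  exact Ideal.isPrime_of_mem_or_compl_mem (fun {c} => by
    rcases hp.mem_or_compl_mem (x := f c) with h | h
    · exact Or.inl h
    · exact Or.inr (by simpa [mem_preimageIdeal, map_compl'] using h))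

lemma prime_mem_iff_of_le {r s : Ideal C} (hr : r.IsPrime) (hs : s.IsPrime)
    (hle : ∀ c, c ∈ r → c ∈ s) : ∀ c, c ∈ s ↔ c ∈ r := by
  intro c
  refine ⟨fun hcs => ?_, hle c⟩
  by_contra hcr
  have h1 : cᶜ ∈ s := hle _ (hr.compl_mem_of_notMem hcr)
  exact hs.toIsProper.top_notMem (by simpa using Ideal.sup_mem hcs h1)

/-- Key extension lemma: a prime ideal on `C` extends along `f` to a prime ideal on `A`
avoiding a prescribed element. -/
lemma ext_lemma (f : BoundedLatticeHom C A) (r : Ideal C) (hr : r.IsPrime)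
    (a₀ : A) (ha : ∀ c ∈ r, ¬ a₀ ≤ f c) :
    ∃ p : Ideal A, p.IsPrime ∧ a₀ ∉ p ∧ ∀ c, f c ∈ p ↔ c ∈ r := by
  set Fs : Set A := {a | ∃ c, c ∉ r ∧ a₀ ⊓ f c ≤ a} with hFsdef
  have hFs : IsPFilter Fs := by
    refine IsPFilter.of_def ⟨a₀, ⊤, hr.toIsProper.top_notMem, by simp⟩ ?_ ?_
    · rintro x ⟨c, hc, hx⟩ y ⟨c', hc', hy⟩
      refine ⟨x ⊓ y, ⟨c ⊓ c', fun hmem => ?_, ?_⟩, inf_le_left, inf_le_right⟩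
      · rcases hr.mem_or_mem hmem with h | h
        exacts [hc h, hc' h]
      · exact le_inf (le_trans (by simp; exact le_trans (inf_le_inf_left _ inf_le_left) hx) le_rfl)
          (by simp; exact le_trans (inf_le_inf_left _ inf_le_right) hy)
    · rintro x y hxy ⟨c, hc, hx⟩
      exact ⟨c, hc, hx.trans hxy⟩
  have hIs : IsIdeal {a : A | ∃ c ∈ r, a ≤ f c} := by
    refine ⟨?_, ⟨⊥, ⊥, r.bot_mem, bot_le⟩, ?_⟩
    · rintro x y hle ⟨c, hc, hx⟩
      exact ⟨c, hc, hle.trans hx⟩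
    · rintro x ⟨c, hc, hx⟩ y ⟨c', hc', hy⟩
      exact ⟨x ⊔ y, ⟨c ⊔ c', Ideal.sup_mem hc hc',
        sup_le (hx.trans (by simp)) (hy.trans (by simp))⟩, le_sup_left, le_sup_right⟩
  have hdisj : Disjoint (hFs.toPFilter : Set A) ((hIs.toIdeal : Ideal A) : Set A) := by
    rw [Set.disjoint_left]
    rintro x ⟨c, hc, hx⟩ ⟨c', hc', hx'⟩
    refine ha (c' ⊔ cᶜ) (Ideal.sup_mem hc' (hr.compl_mem_of_notMem hc)) ?_
    have key : a₀ ⊓ f c ≤ f c' := hx.trans hx'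
    calc a₀ = (a₀ ⊓ f c) ⊔ (a₀ ⊓ (f c)ᶜ) := by rw [← inf_sup_left, sup_compl_eq_top, inf_top_eq]
    _ ≤ f c' ⊔ (f c)ᶜ := sup_le_sup key inf_le_right
    _ = f (c' ⊔ cᶜ) := by rw [map_sup, map_compl']
  obtain ⟨J, hJprime, hIJ, hJF⟩ := DistribLattice.prime_ideal_of_disjoint_filter_ideal hdisj
  have ha₀F : a₀ ∈ hFs.toPFilter := ⟨⊤, hr.toIsProper.top_notMem, by simp⟩
  refine ⟨J, hJprime, Set.disjoint_left.1 hJF ha₀F, ?_⟩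
  have hsub : ∀ c, c ∈ r → c ∈ preimageIdeal f J := fun c hc =>
    hIJ (⟨c, hc, le_rfl⟩ : f c ∈ hIs.toIdeal)
  exact fun c => prime_mem_iff_of_le hr (preimageIdeal_isPrime f hJprime) hsub c

lemma exists_prime_not_mem (a₀ : A) (h : a₀ ≠ ⊥) : ∃ p : Ideal A, p.IsPrime ∧ a₀ ∉ p := by
  have hdisj : Disjoint ((PFilter.principal a₀ : PFilter A) : Set A)
      ((Ideal.principal (⊥ : A) : Ideal A) : Set A) := by
    rw [Set.disjoint_left]
    rintro x hx hx'
    exact h (le_bot_iff.1 (le_trans (PFilter.mem_principal.1 hx) (Ideal.mem_principal.1 hx')))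
  obtain ⟨J, hJprime, _, hJF⟩ := DistribLattice.prime_ideal_of_disjoint_filter_ideal hdisj
  exact ⟨J, hJprime, Set.disjoint_left.1 hJF (PFilter.mem_principal.2 le_rfl)⟩

lemma le_of_map_le (f : BoundedLatticeHom C A) (hf : Function.Injective f)
    {x y : C} (h : f x ≤ f y) : x ≤ y :=
  inf_eq_left.1 (hf (by rw [map_inf]; exact inf_eq_left.2 h))

/-- the main pair-construction: given `a, b` not separated by any `c`, produce a matching
pair of prime ideals with `a ∉ p`, `b ∈ q`. -/
lemma superamalg_aux (f : BoundedLatticeHom C A) (g : BoundedLatticeHom C B) (a : A) (b : B)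
    (hno : ∀ c, ¬(a ≤ f c ∧ g c ≤ b)) :
    ∃ (p : Ideal A) (q : Ideal B), p.IsPrime ∧ q.IsPrime ∧
      (∀ c, f c ∈ p ↔ g c ∈ q) ∧ a ∉ p ∧ b ∈ q := by
  have hSs : IsPFilter {c : C | a ≤ f c} := by
    refine IsPFilter.of_def ⟨⊤, by simp⟩ ?_ (fun {x y} hxy hx => hx.trans (OrderHomClass.mono f hxy))
    rintro x hx y hy
    exact ⟨x ⊓ y, by simpa using le_inf hx hy, inf_le_left, inf_le_right⟩
  have hTs : IsIdeal {c : C | g c ≤ b} := by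
    refine ⟨fun x y hle hy => le_trans (OrderHomClass.mono g hle) hy, ⟨⊥, by simp⟩, ?_⟩
    rintro x hx y hy
    exact ⟨x ⊔ y, by simpa using sup_le hx hy, le_sup_left, le_sup_right⟩
  have hdisj : Disjoint (hSs.toPFilter : Set C) ((hTs.toIdeal : Ideal C) : Set C) := by
    rw [Set.disjoint_left]
    exact fun c hc hc' => hno c ⟨hc, hc'⟩
  obtain ⟨r, hrprime, hTr, hrS⟩ := DistribLattice.prime_ideal_of_disjoint_filter_ideal hdisj
  obtain ⟨p, hpprime, hap, hpiff⟩ := ext_lemma f r hrprime a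
    (fun c hc hle => Set.disjoint_left.1 hrS (hle : c ∈ hSs.toPFilter) hc)
  obtain ⟨q, hqprime, hbq, hqiff⟩ := ext_lemma g r hrprime bᶜ (fun c hc hle => by
    have h1 : g cᶜ ≤ b := by
      rw [map_compl']
      exact compl_le_iff_compl_le.1 hle
    have h2 : cᶜ ∈ r := hTr (h1 : cᶜ ∈ hTs.toIdeal)
    exact hrprime.toIsProper.top_notMem (by simpa using Ideal.sup_mem hc h2))
  refine ⟨p, q, hpprime, hqprime, fun c => (hpiff c).trans (hqiff c).symm, hap,
    hqprime.mem_or_compl_mem.resolve_right hbq⟩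

/-- pairing lemma for injectivity: any prime ideal on `A` participates in a matching pair. -/
lemma pair_exists (f : BoundedLatticeHom C A) (g : BoundedLatticeHom C B)
    (hg : Function.Injective g) {p : Ideal A} (hp : p.IsPrime) :
    ∃ q : Ideal B, q.IsPrime ∧ ∀ c, f c ∈ p ↔ g c ∈ q := by
  obtain ⟨q, hq, -, hiff⟩ := ext_lemma g (preimageIdeal f p) (preimageIdeal_isPrime f hp) ⊤
    (fun c hc hle => (preimageIdeal_isPrime f hp).toIsProper.top_notMem
      (by rwa [← hg ((map_top g).trans (top_le_iff.1 hle).symm : g ⊤ = g c)] at hc))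
  exact ⟨q, hq, fun c => (hiff c).symm⟩

end SuperAmalg

namespace SuperAmalg

/-- The canonical bounded lattice hom from a Boolean algebra into sets of (indexed)
prime ideals. -/
def primeHom {A : Type u} [BooleanAlgebra A] {X : Type u} (P : X → Order.Ideal A)
    (hP : ∀ x, (P x).IsPrime) : BoundedLatticeHom A (Set X) where
  toFun a := {x | a ∉ P x}
  map_sup' a b := by
    ext x
    simp only [Set.mem_setOf_eq, Set.sup_eq_union, Set.mem_union]
    rw [Ideal.sup_mem_iff]
    tauto
  map_inf' a b := by
    ext x
    simp only [Set.mem_setOf_eq, Set.inf_eq_inter, Set.mem_inter_iff]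
    constructor
    · intro h
      exact ⟨fun ha => h ((P x).lower inf_le_left ha), fun hb => h ((P x).lower inf_le_right hb)⟩
    · rintro ⟨ha, hb⟩ h
      rcases (hP x).mem_or_mem h with h' | h' <;> [exact ha h'; exact hb h']
  map_top' := by
    ext x
    simp [Set.top_eq_univ, (hP x).toIsProper.top_notMem]
  map_bot' := by
    ext x
    simp [Set.bot_eq_empty, (P x).bot_mem]

@[simp] lemma mem_primeHom {A : Type u} [BooleanAlgebra A] {X : Type u} {P : X → Order.Ideal A}
    {hP : ∀ x, (P x).IsPrime} {a : A} {x : X} : x ∈ primeHom P hP a ↔ a ∉ P x := Iff.rfl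

end SuperAmalg

open SuperAmalg in
theorem boolean_algebra_superamalgamation_aux {A B C : Type u}
    [BooleanAlgebra A] [BooleanAlgebra B] [BooleanAlgebra C]
    (f : BoundedLatticeHom C A) (g : BoundedLatticeHom C B)
    (hf : Function.Injective f) (hg : Function.Injective g) :
    ∃ (D : Type u) (_ : BooleanAlgebra D)
      (h : BoundedLatticeHom A D) (k : BoundedLatticeHom B D),
      Function.Injective h ∧ Function.Injective k ∧
      (∀ c, h (f c) = k (g c)) ∧
      (∀ a b, h a = k b → ∃ c, a = f c ∧ b = g c) ∧
      (∀ a b, h a ≤ k b → ∃ c, a ≤ f c ∧ g c ≤ b) ∧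
      (∀ a b, k b ≤ h a → ∃ c, b ≤ g c ∧ f c ≤ a) := by
  classical
  set X := {pq : Order.Ideal A × Order.Ideal B //
      pq.1.IsPrime ∧ pq.2.IsPrime ∧ ∀ c, f c ∈ pq.1 ↔ g c ∈ pq.2} with hXdef
  set h : BoundedLatticeHom A (Set X) := primeHom (fun x => x.1.1) (fun x => x.2.1) with hh
  set k : BoundedLatticeHom B (Set X) := primeHom (fun x => x.1.2) (fun x => x.2.2.1) with hk
  -- the two superamalgamation directions
  have sup1 : ∀ a b, h a ≤ k b → ∃ c, a ≤ f c ∧ g c ≤ b := by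
    intro a b hab
    by_contra hno
    push_neg at hno
    obtain ⟨p, q, hp, hq, hiff, hap, hbq⟩ := superamalg_aux f g a b
      (fun c hc => hno c hc.1 hc.2)
    exact (hab (show (⟨(p, q), hp, hq, hiff⟩ : X) ∈ h a from hap)) hbq
  have sup2 : ∀ a b, k b ≤ h a → ∃ c, b ≤ g c ∧ f c ≤ a := by
    intro a b hab
    by_contra hno
    push_neg at hno
    obtain ⟨q, p, hq, hp, hiff, hbq, hap⟩ := superamalg_aux g f b a
      (fun c hc => hno c hc.1 hc.2)
    exact (hab (show (⟨(p, q), hp, hq, fun c => (hiff c).symm⟩ : X) ∈ k b from hbq)) hap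
  have hcomm : ∀ c, h (f c) = k (g c) := by
    intro c
    ext x
    exact not_congr (x.2.2.2 c)
  -- injectivity
  have hinj : Function.Injective h := by
    have hmono : ∀ a₁ a₂ : A, h a₁ ≤ h a₂ → a₁ ≤ a₂ := by
      intro a₁ a₂ hle
      by_contra hnle
      have hne : a₁ ⊓ a₂ᶜ ≠ ⊥ := by
        rw [← sdiff_eq, ne_eq, sdiff_eq_bot_iff]; exact hnle
      obtain ⟨p, hp, hmem⟩ := exists_prime_not_mem _ hne
      obtain ⟨q, hq, hiff⟩ := pair_exists f g hg hp
      have h1 : a₁ ∉ p := fun hmem' => hmem (p.lower inf_le_left hmem')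
      have h2 : a₂ ∈ p := (hp.mem_or_compl_mem).resolve_right
        (fun hmem' => hmem (p.lower inf_le_right hmem'))
      exact (hle (show (⟨(p, q), hp, hq, hiff⟩ : X) ∈ h a₁ from h1)) h2
    exact fun a₁ a₂ hne => le_antisymm (hmono _ _ hne.le) (hmono _ _ hne.ge)
  have kinj : Function.Injective k := by
    have hmono : ∀ b₁ b₂ : B, k b₁ ≤ k b₂ → b₁ ≤ b₂ := by
      intro b₁ b₂ hle
      by_contra hnle
      have hne : b₁ ⊓ b₂ᶜ ≠ ⊥ := by
        rw [← sdiff_eq, ne_eq, sdiff_eq_bot_iff]; exact hnle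
      obtain ⟨q, hq, hmem⟩ := exists_prime_not_mem _ hne
      obtain ⟨p, hp, hiff⟩ := pair_exists g f hf hq
      have h1 : b₁ ∉ q := fun hmem' => hmem (q.lower inf_le_left hmem')
      have h2 : b₂ ∈ q := (hq.mem_or_compl_mem).resolve_right
        (fun hmem' => hmem (q.lower inf_le_right hmem'))
      exact (hle (show (⟨(p, q), hp, hq, fun c => (hiff c).symm⟩ : X) ∈ k b₁ from h1)) h2
    exact fun b₁ b₂ hne => le_antisymm (hmono _ _ hne.le) (hmono _ _ hne.ge)
  refine ⟨Set X, inferInstance, h, k, hinj, kinj, hcomm, ?_, sup1, sup2⟩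
  intro a b hab
  obtain ⟨c₁, hc₁, hc₁'⟩ := sup1 a b hab.le
  obtain ⟨c₂, hc₂, hc₂'⟩ := sup2 a b hab.ge
  have e1 : c₂ ≤ c₁ := le_of_map_le f hf (hc₂'.trans hc₁)
  have e2 : c₁ ≤ c₂ := le_of_map_le g hg (hc₁'.trans hc₂)
  have : c₁ = c₂ := le_antisymm e2 e1
  subst this
  exact ⟨c₁, le_antisymm hc₁ hc₂', le_antisymm hc₂ hc₁'⟩


/-- The class of Boolean algebras has the superamalgamation property. -/
theorem boolean_algebra_superamalgamation {A B C : Type u}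
    [BooleanAlgebra A] [BooleanAlgebra B] [BooleanAlgebra C]
    (f : BoundedLatticeHom C A) (g : BoundedLatticeHom C B)
    (hf : Function.Injective f) (hg : Function.Injective g) :
    ∃ (D : Type u) (_ : BooleanAlgebra D)
      (h : BoundedLatticeHom A D) (k : BoundedLatticeHom B D),
      Function.Injective h ∧ Function.Injective k ∧
      (∀ c, h (f c) = k (g c)) ∧
      (∀ a b, h a = k b → ∃ c, a = f c ∧ b = g c) ∧
      (∀ a b, h a ≤ k b → ∃ c, a ≤ f c ∧ g c ≤ b) ∧
      (∀ a b, k b ≤ h a → ∃ c, b ≤ g c ∧ f c ≤ a) := by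
  exact boolean_algebra_superamalgamation_aux f g hf hg
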